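/- arXiv:1603.08097 — 2 statements merged into one kernel-verified Lean document; each statement's English description precedes it below -/
import Mathlib

section
/- For every natural number j ≥ 1, the series ∑_{r=1}^∞ arctan( F_j²·L_j·L_{4jr} / (F_{4jr}² − F_{2j}² + F_j²) ) converges and its sum equals arctan( 1 / L_j ). -/
def lucas : ℕ → ℕ
  | 0 => 2
  | 1 => 1
  | n + 2 => lucas (n + 1) + lucas n

open Nat Real Filter

lemma lucasEq : ∀ n : ℕ, (lucas n : ℤ) = 2 * (Nat.fib (n + 1) : ℤ) - Nat.fib n
  | 0 => by simp [lucas]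
  | 1 => by simp [lucas]
  | n + 2 => by
    have h1 := lucasEq (n + 1)
    have h2 := lucasEq n
    have e1 : (Nat.fib (n + 2) : ℤ) = Nat.fib n + Nat.fib (n + 1) := by
      exact_mod_cast Nat.fib_add_two
    have e2 : (Nat.fib (n + 3) : ℤ) = Nat.fib (n + 1) + Nat.fib (n + 2) := by
      exact_mod_cast Nat.fib_add_two
    show ((lucas (n + 1) + lucas n : ℕ) : ℤ) = _
    push_cast
    rw [h1, h2]
    linarith

lemma cassini : ∀ m : ℕ, (Nat.fib (m + 1) : ℤ) ^ 2 - Nat.fib (m + 1) * Nat.fib m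
    - (Nat.fib m : ℤ) ^ 2 = (-1) ^ m
  | 0 => by simp
  | m + 1 => by
    have h := cassini m
    have e1 : (Nat.fib (m + 2) : ℤ) = Nat.fib m + Nat.fib (m + 1) := by
      exact_mod_cast Nat.fib_add_two
    rw [e1, pow_succ]
    linear_combination (-1 : ℤ) * h

lemma fibAdd (m k : ℕ) : (Nat.fib (m + k) : ℤ)
    = Nat.fib m * (Nat.fib (k + 1) - Nat.fib k) + Nat.fib (m + 1) * Nat.fib k := by
  cases k with
  | zero => simp
  | succ k =>
    have h : (Nat.fib (m + k + 1) : ℤ) = Nat.fib m * Nat.fib k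
        + Nat.fib (m + 1) * Nat.fib (k + 1) := by exact_mod_cast Nat.fib_add m k
    have e : (Nat.fib (k + 2) : ℤ) = Nat.fib k + Nat.fib (k + 1) := by
      exact_mod_cast Nat.fib_add_two
    rw [show m + (k + 1) = m + k + 1 from rfl, h, e]
    ring

lemma fibAdd1 (m k : ℕ) : (Nat.fib (m + k + 1) : ℤ)
    = Nat.fib m * Nat.fib k + Nat.fib (m + 1) * Nat.fib (k + 1) := by
  exact_mod_cast Nat.fib_add m k

lemma I2 (m k : ℕ) (hk : Even k) : (Nat.fib (m + 2 * k) : ℤ)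
    = Nat.fib m + Nat.fib k * lucas (m + k) := by
  have hck : (Nat.fib (k + 1) : ℤ) ^ 2 - Nat.fib (k + 1) * Nat.fib k
      - (Nat.fib k : ℤ) ^ 2 = 1 := by rw [cassini k, hk.neg_one_pow]
  have h3 : (Nat.fib (m + 2 * k) : ℤ) = Nat.fib (m + k) * (Nat.fib (k + 1) - Nat.fib k)
      + Nat.fib (m + k + 1) * Nat.fib k := by
    rw [show m + 2 * k = m + k + k by ring]; exact fibAdd (m + k) k
  rw [h3, fibAdd m k, fibAdd1 m k, lucasEq, fibAdd1 m k, fibAdd m k]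
  linear_combination (Nat.fib m : ℤ) * hck

lemma I1 (m k : ℕ) (hm : Even m) : (Nat.fib m : ℤ) * Nat.fib (m + 2 * k)
    = Nat.fib (m + k) ^ 2 - Nat.fib k ^ 2 := by
  have hcm : (Nat.fib (m + 1) : ℤ) ^ 2 - Nat.fib (m + 1) * Nat.fib m
      - (Nat.fib m : ℤ) ^ 2 = 1 := by rw [cassini m, hm.neg_one_pow]
  have h3 : (Nat.fib (m + 2 * k) : ℤ) = Nat.fib (m + k) * (Nat.fib (k + 1) - Nat.fib k)
      + Nat.fib (m + k + 1) * Nat.fib k := by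
    rw [show m + 2 * k = m + k + k by ring]; exact fibAdd (m + k) k
  rw [h3, fibAdd m k, fibAdd1 m k]
  linear_combination (-(Nat.fib k : ℤ) ^ 2) * hcm

lemma fibTwoMul (j : ℕ) : (Nat.fib (2 * j) : ℤ) = Nat.fib j * lucas j := by
  have h := fibAdd j j
  rw [show 2 * j = j + j by ring, h, lucasEq]
  ring

lemma lucas_pos : ∀ n : ℕ, 0 < lucas n
  | 0 => by simp [lucas]
  | 1 => by simp [lucas]
  | n + 2 => by
    have := lucas_pos (n + 1)
    show 0 < lucas (n + 1) + lucas n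
    omega

lemma keyEq (j r : ℕ) (hj : 1 ≤ j) :
    Real.arctan ((Nat.fib j : ℝ) ^ 2 * (lucas j : ℝ) * (lucas (4 * j * (1 + r)) : ℝ) /
      ((Nat.fib (4 * j * (1 + r)) : ℝ) ^ 2 - (Nat.fib (2 * j) : ℝ) ^ 2 + (Nat.fib j : ℝ) ^ 2))
    = Real.arctan ((Nat.fib j : ℝ) / Nat.fib (4 * j * r + 2 * j))
      - Real.arctan ((Nat.fib j : ℝ) / Nat.fib (4 * j * (r + 1) + 2 * j)) := by
  have hm : Even (4 * j * r + 2 * j) := ⟨2 * j * r + j, by ring⟩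
  have hk : Even (2 * j) := ⟨j, by ring⟩
  have hI1 := I1 (4 * j * r + 2 * j) (2 * j) hm
  have hI2 := I2 (4 * j * r + 2 * j) (2 * j) hk
  rw [show 4 * j * r + 2 * j + 2 * (2 * j) = 4 * j * (r + 1) + 2 * j by ring,
    show 4 * j * r + 2 * j + 2 * j = 4 * j * (1 + r) by ring] at hI1 hI2
  have hI3 := fibTwoMul j
  have hR1 : (Nat.fib (4 * j * r + 2 * j) : ℝ) * Nat.fib (4 * j * (r + 1) + 2 * j)
      = (Nat.fib (4 * j * (1 + r)) : ℝ) ^ 2 - (Nat.fib (2 * j) : ℝ) ^ 2 := by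
    exact_mod_cast hI1
  have hR2 : (Nat.fib (4 * j * (r + 1) + 2 * j) : ℝ)
      = Nat.fib (4 * j * r + 2 * j) + Nat.fib (2 * j) * lucas (4 * j * (1 + r)) := by
    exact_mod_cast hI2
  have hR3 : (Nat.fib (2 * j) : ℝ) = Nat.fib j * lucas j := by exact_mod_cast hI3
  set u : ℝ := (Nat.fib j : ℝ) / Nat.fib (4 * j * r + 2 * j) with hu
  set v : ℝ := (Nat.fib j : ℝ) / Nat.fib (4 * j * (r + 1) + 2 * j) with hv
  have hfj : (0 : ℝ) < Nat.fib j := by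
    exact_mod_cast Nat.fib_pos.mpr (by omega)
  have hfm : (0 : ℝ) < Nat.fib (4 * j * r + 2 * j) := by
    exact_mod_cast Nat.fib_pos.mpr (by positivity)
  have hfM : (0 : ℝ) < Nat.fib (4 * j * (r + 1) + 2 * j) := by
    exact_mod_cast Nat.fib_pos.mpr (by positivity)
  have hupos : 0 < u := by positivity
  have hvpos : 0 < v := by positivity
  have hlt : u * -v < 1 := by nlinarith
  have h := Real.arctan_add (x := u) (y := -v) hlt
  rw [Real.arctan_neg, ← sub_eq_add_neg] at h
  rw [h]
  congr 1
  have hden : (Nat.fib (4 * j * (1 + r)) : ℝ) ^ 2 - (Nat.fib (2 * j) : ℝ) ^ 2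
      + (Nat.fib j : ℝ) ^ 2
      = Nat.fib (4 * j * r + 2 * j) * Nat.fib (4 * j * (r + 1) + 2 * j)
        + (Nat.fib j : ℝ) ^ 2 := by rw [hR1]
  rw [hden, hu, hv]
  rw [div_eq_div_iff (by positivity) (by nlinarith)]
  field_simp
  rw [hR2, hR3]
  ring

theorem stmt5 (j : ℕ) (hj : 1 ≤ j) :
    HasSum (fun r : ℕ =>
        Real.arctan ((Nat.fib j : ℝ) ^ 2 * (lucas j : ℝ) * (lucas (4 * j * (1 + r)) : ℝ) /
          ((Nat.fib (4 * j * (1 + r)) : ℝ) ^ 2 - (Nat.fib (2 * j) : ℝ) ^ 2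
            + (Nat.fib j : ℝ) ^ 2)))
      (Real.arctan (1 / (lucas j : ℝ))) := by
  set g : ℕ → ℝ := fun r => Real.arctan ((Nat.fib j : ℝ) / Nat.fib (4 * j * r + 2 * j)) with hg
  have hfun : (fun r : ℕ =>
      Real.arctan ((Nat.fib j : ℝ) ^ 2 * (lucas j : ℝ) * (lucas (4 * j * (1 + r)) : ℝ) /
        ((Nat.fib (4 * j * (1 + r)) : ℝ) ^ 2 - (Nat.fib (2 * j) : ℝ) ^ 2
          + (Nat.fib j : ℝ) ^ 2))) = fun r => g r - g (r + 1) :=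
    funext fun r => keyEq j r hj
  rw [hfun]
  have hT : Filter.Tendsto g Filter.atTop (nhds 0) := by
    have h2 : Filter.Tendsto (fun r : ℕ => Nat.fib (4 * j * r + 2 * j)) Filter.atTop
        Filter.atTop := by
      apply tendsto_atTop_mono' Filter.atTop ?_ tendsto_id
      filter_upwards [Filter.eventually_ge_atTop 5] with r hr
      calc (id r : ℕ) = r := rfl
        _ ≤ Nat.fib r := Nat.le_fib_self hr
        _ ≤ Nat.fib (4 * j * r + 2 * j) := Nat.fib_mono (by nlinarith)
    have h1 : Filter.Tendsto (fun r : ℕ => (Nat.fib (4 * j * r + 2 * j) : ℝ)) Filter.atTop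
        Filter.atTop := tendsto_natCast_atTop_atTop.comp h2
    have h3 : Filter.Tendsto (fun r : ℕ => (Nat.fib j : ℝ) / Nat.fib (4 * j * r + 2 * j))
        Filter.atTop (nhds 0) := Filter.Tendsto.div_atTop tendsto_const_nhds h1
    have h4 := (Real.continuous_arctan.tendsto 0).comp h3
    rw [Real.arctan_zero] at h4
    exact h4
  have hnn : ∀ r : ℕ, 0 ≤ g r - g (r + 1) := by
    intro r
    rw [sub_nonneg, hg]
    apply Real.arctan_strictMono.monotone
    have hfm : (0 : ℝ) < Nat.fib (4 * j * r + 2 * j) := by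
      exact_mod_cast Nat.fib_pos.mpr (by positivity)
    gcongr
    · omega
  rw [hasSum_iff_tendsto_nat_of_nonneg hnn]
  have hps : ∀ n : ℕ, ∑ i ∈ Finset.range n, (g i - g (i + 1)) = g 0 - g n := fun n =>
    Finset.sum_range_sub' g n
  simp only [hps]
  have h0 : g 0 = Real.arctan (1 / (lucas j : ℝ)) := by
    have hfj : (0 : ℝ) < Nat.fib j := by exact_mod_cast Nat.fib_pos.mpr (by omega)
    have hL : (0 : ℝ) < lucas j := by exact_mod_cast lucas_pos j
    have hR3 : (Nat.fib (2 * j) : ℝ) = Nat.fib j * lucas j := by exact_mod_cast fibTwoMul j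
    rw [hg]
    simp only [show 4 * j * 0 + 2 * j = 2 * j by ring]
    congr 1
    rw [hR3]
    field_simp
  rw [← h0]
  simpa using Filter.Tendsto.sub tendsto_const_nhds hT
end

section
/- For every natural number j ≥ 1, the series ∑_{r=1}^∞ arctan( √5·F_{4j} / L_{4jr−2j} ) converges and its sum equals π/2. -/
open Real

lemma lucas_binet : ∀ n : ℕ, (lucas n : ℝ) = goldenRatio ^ n + goldenConj ^ n
  | 0 => by
    show ((2 : ℕ) : ℝ) = _
    rw [pow_zero, pow_zero]; norm_num
  | 1 => by
    show ((1 : ℕ) : ℝ) = _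
    rw [pow_one, pow_one, goldenRatio_add_goldenConj]; norm_num
  | n + 2 => by
    have h1 := lucas_binet (n + 1)
    have h2 := lucas_binet n
    have hφ : goldenRatio ^ (n + 2) = goldenRatio ^ (n + 1) + goldenRatio ^ n := by
      calc goldenRatio ^ (n + 2) = goldenRatio ^ n * goldenRatio ^ 2 := by ring
        _ = goldenRatio ^ n * (goldenRatio + 1) := by rw [goldenRatio_sq]
        _ = _ := by ring
    have hψ : goldenConj ^ (n + 2) = goldenConj ^ (n + 1) + goldenConj ^ n := by
      calc goldenConj ^ (n + 2) = goldenConj ^ n * goldenConj ^ 2 := by ring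
        _ = goldenConj ^ n * (goldenConj + 1) := by rw [goldenConj_sq]
        _ = _ := by ring
    rw [lucas, Nat.cast_add, h1, h2, hφ, hψ]; ring

lemma goldConj_even_pow (k : ℕ) :
    goldenConj ^ (2 * k) = (goldenRatio ^ (2 * k))⁻¹ := by
  have hprod : goldenRatio ^ (2 * k) * goldenConj ^ (2 * k) = 1 := by
    rw [← mul_pow, goldenRatio_mul_goldenConj, pow_mul]
    norm_num
  exact (inv_eq_of_mul_eq_one_right hprod).symm

theorem stmt12 (j : ℕ) (hj : 1 ≤ j) :
    HasSum (fun r : ℕ =>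
        Real.arctan (Real.sqrt 5 * (Nat.fib (4 * j) : ℝ) /
          (lucas (4 * j * (1 + r) - 2 * j) : ℝ)))
      (Real.pi / 2) := by
  set t : ℝ := goldenRatio ^ (2 * j) with ht_def
  have ht1 : 1 < t := one_lt_pow₀ one_lt_goldenRatio (by omega)
  -- the numerator
  have hnum : Real.sqrt 5 * (Nat.fib (4 * j) : ℝ) = t ^ 2 - (t ^ 2)⁻¹ := by
    have h5 : Real.sqrt 5 ≠ 0 := by positivity
    rw [Real.coe_fib_eq, mul_comm, div_mul_cancel₀ _ h5]
    have e1 : goldenRatio ^ (4 * j) = t ^ 2 := by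
      rw [ht_def, ← pow_mul]; congr 1; ring
    have e2 : goldenConj ^ (4 * j) = (t ^ 2)⁻¹ := by
      have h4 : 4 * j = 2 * (2 * j) := by ring
      rw [h4, goldConj_even_pow, ht_def, ← pow_mul]
      congr 2
      ring
    rw [e1, e2]
  -- the denominators
  have hluc : ∀ r : ℕ, (lucas (4 * j * (1 + r) - 2 * j) : ℝ) =
      t ^ (2 * r + 1) + (t ^ (2 * r + 1))⁻¹ := by
    intro r
    have hidx : 4 * j * (1 + r) - 2 * j = 2 * (j * (2 * r + 1)) := by
      have h : 4 * j * (1 + r) = 2 * (j * (2 * r + 1)) + 2 * j := by ring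
      rw [h, Nat.add_sub_cancel]
    rw [hidx, lucas_binet, goldConj_even_pow]
    have e : goldenRatio ^ (2 * (j * (2 * r + 1))) = t ^ (2 * r + 1) := by
      rw [ht_def, ← pow_mul]; congr 1; ring
    rw [e]
  clear_value t
  clear ht_def
  have ht0 : 0 < t := lt_trans one_pos ht1
  have htne : t ≠ 0 := ne_of_gt ht0
  set b : ℕ → ℝ := fun k => Real.arctan (t ^ 2 / t ^ (2 * k + 1)) with hb_def
  have hbk : ∀ k : ℕ, b k = Real.arctan (t ^ 2 / t ^ (2 * k + 1)) := fun _ => rfl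
  -- telescoping identity
  have halg : ∀ r : ℕ, (t ^ 2 - (t ^ 2)⁻¹) / (t ^ (2 * r + 1) + (t ^ (2 * r + 1))⁻¹) =
      (t ^ 2 / t ^ (2 * r + 1) + -(t ^ 2 / t ^ (2 * (r + 2) + 1))) /
        (1 - t ^ 2 / t ^ (2 * r + 1) * -(t ^ 2 / t ^ (2 * (r + 2) + 1))) := by
    intro r
    have e5 : t ^ (2 * (r + 2) + 1) = t ^ (2 * r + 1) * t ^ 4 := by
      rw [show 2 * (r + 2) + 1 = (2 * r + 1) + 4 from by ring, pow_add]
    have hTne : t ^ (2 * r + 1) ≠ 0 := pow_ne_zero _ htne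
    have hT0 : (0:ℝ) < t ^ (2 * r + 1) := pow_pos ht0 _
    have hden : (0:ℝ) < t ^ (2 * r + 1) + (t ^ (2 * r + 1))⁻¹ := by positivity
    rw [e5]
    have hden2 : (0:ℝ) < 1 - t ^ 2 / t ^ (2 * r + 1) * -(t ^ 2 / (t ^ (2 * r + 1) * t ^ 4)) := by
      have : 0 < t ^ 2 / t ^ (2 * r + 1) * (t ^ 2 / (t ^ (2 * r + 1) * t ^ 4)) := by positivity
      linarith
    rw [div_eq_div_iff hden.ne' hden2.ne']
    field_simp
    ring
  have key : ∀ r : ℕ,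
      Real.arctan (Real.sqrt 5 * (Nat.fib (4 * j) : ℝ) /
        (lucas (4 * j * (1 + r) - 2 * j) : ℝ)) = b r - b (r + 2) := by
    intro r
    have hx0 : 0 < t ^ 2 / t ^ (2 * r + 1) := by positivity
    have hy0 : 0 < t ^ 2 / t ^ (2 * (r + 2) + 1) := by positivity
    have hxy : t ^ 2 / t ^ (2 * r + 1) * -(t ^ 2 / t ^ (2 * (r + 2) + 1)) < 1 := by nlinarith
    rw [hnum, hluc r, halg r, ← Real.arctan_add hxy, Real.arctan_neg, hbk r, hbk (r + 2)]
    ring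
  -- limit of b
  have hb_lim : Filter.Tendsto b Filter.atTop (nhds 0) := by
    have heq : (fun k : ℕ => t ^ 2 / t ^ (2 * k + 1)) = fun k : ℕ => t * ((t ^ 2)⁻¹) ^ k := by
      funext k
      rw [inv_pow, ← pow_mul, ← div_eq_mul_inv,
        div_eq_div_iff (by positivity) (by positivity), ← pow_add, mul_comm t (t ^ (2 * k + 1)),
        ← pow_succ]
      congr 1
      ring
    have harg : Filter.Tendsto (fun k : ℕ => t ^ 2 / t ^ (2 * k + 1)) Filter.atTop (nhds 0) := by
      rw [heq]
      have hgeo : Filter.Tendsto (fun k : ℕ => ((t ^ 2)⁻¹) ^ k) Filter.atTop (nhds 0) := by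
        apply tendsto_pow_atTop_nhds_zero_of_lt_one (by positivity)
        rw [inv_lt_one_iff₀]
        right; nlinarith
      simpa using hgeo.const_mul t
    have := (Real.continuous_arctan.tendsto 0).comp harg
    simpa [hb_def, Real.arctan_zero, Function.comp_def] using this
  -- partial sums telescope
  have hpartial : ∀ N : ℕ, ∑ r ∈ Finset.range N, (b r - b (r + 2)) =
      b 0 + b 1 - (b N + b (N + 1)) := by
    intro N
    induction N with
    | zero => simp
    | succ N ih => rw [Finset.sum_range_succ, ih]; ring
  -- value of b 0 + b 1
  have hval : b 0 + b 1 = Real.pi / 2 := by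
    have h0 : b 0 = Real.arctan t := by
      rw [hbk]
      congr 1
      rw [show (2 * 0 + 1 : ℕ) = 1 from rfl, pow_one, sq, mul_div_assoc, div_self htne, mul_one]
    have h1 : b 1 = Real.arctan t⁻¹ := by
      rw [hbk]
      congr 1
      rw [show (2 * 1 + 1 : ℕ) = 3 from rfl]
      field_simp
    rw [h0, h1, Real.arctan_inv_of_pos ht0]
    ring
  -- convergence of partial sums
  have hsum : Filter.Tendsto (fun N => ∑ r ∈ Finset.range N, (b r - b (r + 2)))
      Filter.atTop (nhds (Real.pi / 2)) := by
    simp only [hpartial]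
    rw [← hval]
    have h2 : Filter.Tendsto (fun N : ℕ => b N + b (N + 1)) Filter.atTop (nhds 0) := by
      have := hb_lim.add (hb_lim.comp (Filter.tendsto_add_atTop_nat 1))
      simpa using this
    simpa using (tendsto_const_nhds (x := b 0 + b 1)).sub h2
  -- nonnegativity of terms
  have hnonneg : ∀ r : ℕ, 0 ≤ b r - b (r + 2) := by
    intro r
    rw [sub_nonneg, hbk, hbk]
    apply Real.arctan_strictMono.monotone
    gcongr
    · exact ht1.le
    · omega
  have hg : HasSum (fun r : ℕ => b r - b (r + 2)) (Real.pi / 2) :=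
    (hasSum_iff_tendsto_nat_of_nonneg hnonneg _).mpr hsum
  have heq2 : (fun r : ℕ => b r - b (r + 2)) = fun r : ℕ =>
      Real.arctan (Real.sqrt 5 * (Nat.fib (4 * j) : ℝ) /
        (lucas (4 * j * (1 + r) - 2 * j) : ℝ)) := funext fun r => (key r).symm
  rwa [heq2] at hg
end
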